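/- Let K/ℚ be Galois with group G, α a primitive element, χ a non-trivial absolutely irreducible character of degree 1 and order l of G, and C(χ) the rational central idempotent ∑_{σ ∈ Gal(ℚ(ζ_l)/ℚ)} c_{σ∘χ}. Define LR(χ) = {M ∈ ℚ[G] : M = M·C(χ), M·(∑_g g(α)g^{-1}) = 0}. Then LR(χ) ≠ {0} if and only if ∑_{g∈G} χ(g)^d g(α) = 0 for every integer d coprime to l; and in that case LR(χ) = {∑_g Tr_{ℚ(ζ_l)/ℚ}(m·conj(χ(g))) g : m ∈ ℚ(ζ_l)}, which has ℚ-dimension [ℚ(ζ_l):ℚ] = φ(l). -/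

import Mathlib

open scoped BigOperators

section Aux
variable {G : Type*} [Group G] [Fintype G]

omit [Group G] in
lemma aux_sum_single_apply {R : Type*} [Semiring R] (a : G → R) (k : G) :
    (∑ h : G, MonoidAlgebra.single h (a h)).coeff k = a k := by
  classical
  rw [MonoidAlgebra.coeff_sum, Finset.sum_apply']
  simp [MonoidAlgebra.coeff_single, Finsupp.single_apply, Finset.sum_ite_eq' Finset.univ k a]

omit [Group G] in
lemma aux_sum_single_eq_iff {R : Type*} [Semiring R] (a b : G → R) :
    (∑ h : G, MonoidAlgebra.single h (a h)) = ∑ h : G, MonoidAlgebra.single h (b h) ↔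
      ∀ k, a k = b k := by
  constructor
  · intro H k
    have := congrArg (fun f => f.coeff k) H
    simpa [aux_sum_single_apply, -MonoidAlgebra.coeff_sum] using this
  · intro H
    exact Finset.sum_congr rfl fun k _ => by rw [H]

set_option linter.unusedSectionVars false in
lemma aux_sum_single_eq_zero_iff {R : Type*} [Semiring R] (a : G → R) :
    (∑ h : G, MonoidAlgebra.single h (a h)) = 0 ↔ ∀ k, a k = 0 := by
  constructor
  · intro H k
    have := congrArg (fun f => f.coeff k) H
    simpa [aux_sum_single_apply, -MonoidAlgebra.coeff_sum] using this
  · intro H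
    rw [Finset.sum_congr rfl fun k _ => by rw [H k]]
    simp

lemma aux_mul_single {R : Type*} [Semiring R] (a b : G → R) :
    (∑ h : G, MonoidAlgebra.single h (a h)) * (∑ g : G, MonoidAlgebra.single g (b g)) =
      ∑ k : G, MonoidAlgebra.single k (∑ g : G, a (k * g⁻¹) * b g) := by
  classical
  rw [Finset.sum_mul_sum]
  rw [Finset.sum_comm]
  have : ∀ g : G, ∑ h : G, MonoidAlgebra.single h (a h) * MonoidAlgebra.single g (b g)
      = ∑ k : G, MonoidAlgebra.single k (a (k * g⁻¹) * b g) := by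
    intro g
    rw [← Equiv.sum_comp (Equiv.mulRight g) (fun k => MonoidAlgebra.single k (a (k * g⁻¹) * b g))]
    refine Finset.sum_congr rfl fun h _ => ?_
    simp [MonoidAlgebra.single_mul_single]
  rw [Finset.sum_congr rfl fun g _ => this g, Finset.sum_comm]
  refine Finset.sum_congr rfl fun k _ => ?_
  exact (map_sum (MonoidAlgebra.singleAddHom k) _ _).symm

lemma aux_char_sum_zero {ψ : G →* ℂ} (h₀ : ∃ g, ψ g ≠ 1) : ∑ g : G, ψ g = 0 := by
  obtain ⟨g₀, hg₀⟩ := h₀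
  have h : ψ g₀ * ∑ g : G, ψ g = ∑ g : G, ψ g := by
    rw [Finset.mul_sum]
    rw [← Equiv.sum_comp (Equiv.mulLeft g₀) (fun g => ψ g)]
    exact Finset.sum_congr rfl fun g _ => by simp [map_mul]
  have h2 : (ψ g₀ - 1) * ∑ g : G, ψ g = 0 := by ring_nf; rw [mul_comm] at h; linear_combination h
  rcases mul_eq_zero.mp h2 with h3 | h3
  · exact absurd (sub_eq_zero.mp h3) hg₀
  · exact h3

omit [Group G] in
lemma aux_zpow_eq_one {x : ℂ} {l : ℕ} (hx : x ^ l = 1) {d : ℤ} (h : (l : ℤ) ∣ d) : x ^ d = 1 := by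
  obtain ⟨q, rfl⟩ := h
  rw [zpow_mul, zpow_natCast, hx, one_zpow]

end Aux

set_option maxHeartbeats 2000000 in
set_option synthInstance.maxHeartbeats 800000 in
theorem stmt_10 (K₀ : IntermediateField ℚ ℂ) [FiniteDimensional ℚ ↥K₀] [IsGalois ℚ ↥K₀]
    (α : ↥K₀) (hα : IntermediateField.adjoin ℚ {α} = ⊤)
    (l : ℕ) (hl : 1 < l)
    (χ : (↥K₀ ≃ₐ[ℚ] ↥K₀) →* ℂ)
    (hχl : ∀ g, χ g ^ l = 1)
    (hχord : ∃ g, IsPrimitiveRoot (χ g) l)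
    (L : IntermediateField ℚ ℂ)
    (hL : L = IntermediateField.adjoin ℚ (Set.range χ))
    (hmem : ∀ g, χ g ∈ L)
    (CQ : MonoidAlgebra ℚ (↥K₀ ≃ₐ[ℚ] ↥K₀))
    (hCQ : CQ = (Fintype.card (↥K₀ ≃ₐ[ℚ] ↥K₀) : ℚ)⁻¹ •
      ∑ g : ↥K₀ ≃ₐ[ℚ] ↥K₀,
        MonoidAlgebra.single g (Algebra.trace ℚ ↥L ⟨χ g⁻¹, hmem g⁻¹⟩))
    (LR : Set ((↥K₀ ≃ₐ[ℚ] ↥K₀) → ℚ))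
    (hLR : LR = {m |
      ((∑ h : ↥K₀ ≃ₐ[ℚ] ↥K₀, MonoidAlgebra.single h (m h) : MonoidAlgebra ℚ (↥K₀ ≃ₐ[ℚ] ↥K₀))
        = (∑ h : ↥K₀ ≃ₐ[ℚ] ↥K₀, MonoidAlgebra.single h (m h)) * CQ) ∧
      ((∑ h : ↥K₀ ≃ₐ[ℚ] ↥K₀, MonoidAlgebra.single h ((m h : ℂ)))
        * (∑ g : ↥K₀ ≃ₐ[ℚ] ↥K₀, MonoidAlgebra.single (g⁻¹) ((g α : ↥K₀) : ℂ))
        : MonoidAlgebra ℂ (↥K₀ ≃ₐ[ℚ] ↥K₀)) = 0}) :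
    ((∃ m ∈ LR, m ≠ 0) ↔
      ∀ d : ℤ, IsCoprime d (l : ℤ) →
        ∑ g : ↥K₀ ≃ₐ[ℚ] ↥K₀, χ g ^ d * ((g α : ↥K₀) : ℂ) = 0) ∧
    ((∀ d : ℤ, IsCoprime d (l : ℤ) →
        ∑ g : ↥K₀ ≃ₐ[ℚ] ↥K₀, χ g ^ d * ((g α : ↥K₀) : ℂ) = 0) →
      (LR = {m | ∃ c : ↥L, ∀ g : ↥K₀ ≃ₐ[ℚ] ↥K₀,
          m g = Algebra.trace ℚ ↥L (c * ⟨χ g⁻¹, hmem g⁻¹⟩)} ∧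
        Function.Injective (fun c : ↥L => fun g : ↥K₀ ≃ₐ[ℚ] ↥K₀ =>
          Algebra.trace ℚ ↥L (c * ⟨χ g⁻¹, hmem g⁻¹⟩)) ∧
        Module.finrank ℚ ↥L = Nat.totient l)) := by
  classical
  obtain ⟨g₀, hζ⟩ := hχord
  have hl0 : l ≠ 0 := by omega
  haveI : NeZero l := ⟨hl0⟩
  have hχ0 : ∀ g : (↥K₀ ≃ₐ[ℚ] ↥K₀), χ g ≠ 0 := by
    intro g h
    have := hχl g
    rw [h, zero_pow hl0] at this
    exact zero_ne_one this
  -- X g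
  set X : (↥K₀ ≃ₐ[ℚ] ↥K₀) → ↥L := fun g => ⟨χ g, hmem g⟩ with hX
  have hXval : ∀ g, (X g : ℂ) = χ g := fun g => rfl
  have hXmul : ∀ g h : (↥K₀ ≃ₐ[ℚ] ↥K₀), X (g * h) = X g * X h := by
    intro g h; apply Subtype.ext; rw [MulMemClass.coe_mul]; exact map_mul χ g h
  have hXpow : ∀ (g : (↥K₀ ≃ₐ[ℚ] ↥K₀)) (k : ℕ), X (g ^ k) = X g ^ k := by
    intro g k; apply Subtype.ext; rw [SubmonoidClass.coe_pow]; exact map_pow χ g k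
  have hXl : ∀ g, X g ^ l = 1 := by
    intro g; apply Subtype.ext; rw [SubmonoidClass.coe_pow, OneMemClass.coe_one]; exact hχl g
  have hpow : ∀ g : (↥K₀ ≃ₐ[ℚ] ↥K₀), ∃ k, χ g = χ g₀ ^ k := by
    intro g
    obtain ⟨i, _, hi⟩ := hζ.eq_pow_of_pow_eq_one (hχl g)
    exact ⟨i, hi.symm⟩
  -- cyclotomic extension structure on L
  have hζint : IsIntegral ℚ (χ g₀) := by
    refine ⟨Polynomial.X ^ l - 1, ?_, ?_⟩
    · apply Polynomial.monic_X_pow_sub_C _ hl0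
    · simp [hχl g₀]
  have hadj1 : IntermediateField.adjoin ℚ (Set.range χ) = IntermediateField.adjoin ℚ {χ g₀} := by
    have h1 : ∀ g, χ g ∈ IntermediateField.adjoin ℚ {χ g₀} := by
      intro g
      obtain ⟨k, hk⟩ := hpow g
      rw [hk]
      exact pow_mem (IntermediateField.mem_adjoin_simple_self ℚ (χ g₀)) k
    apply le_antisymm
    · apply IntermediateField.adjoin_le_iff.mpr
      intro x hx
      obtain ⟨g, rfl⟩ := hx
      exact h1 g
    · apply IntermediateField.adjoin_le_iff.mpr
      intro x hx
      rw [Set.mem_singleton_iff] at hx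
      subst hx
      exact IntermediateField.subset_adjoin ℚ _ ⟨g₀, rfl⟩
  have hLsub : L.toSubalgebra = Algebra.adjoin ℚ {χ g₀} := by
    rw [hL, hadj1, ← IntermediateField.adjoin_simple_toSubalgebra_of_isAlgebraic hζint.isAlgebraic]
  letI lp : ℕ+ := ⟨l, by omega⟩
  have hequiv : ↥L ≃ₐ[ℚ] ↥(Algebra.adjoin ℚ ({χ g₀} : Set ℂ)) :=
    Subalgebra.equivOfEq _ _ hLsub
  haveI hcyc : IsCyclotomicExtension {(lp : ℕ)} ℚ ↥L := by
    haveI : IsCyclotomicExtension {(lp : ℕ)} ℚ ↥(Algebra.adjoin ℚ ({χ g₀} : Set ℂ)) :=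
      IsPrimitiveRoot.adjoin_isCyclotomicExtension ℚ (n := lp) hζ
    exact IsCyclotomicExtension.equiv (S := {(lp : ℕ)}) ℚ _ hequiv.symm
  haveI : FiniteDimensional ℚ ↥L := IsCyclotomicExtension.finiteDimensional {(lp : ℕ)} ℚ ↥L
  haveI : IsGalois ℚ ↥L := IsCyclotomicExtension.isGalois {(lp : ℕ)} ℚ ↥L
  have hfr : Module.finrank ℚ ↥L = Nat.totient l :=
    IsCyclotomicExtension.finrank (n := lp) ↥L (Polynomial.cyclotomic.irreducible_rat lp.pos)
  have hζL : IsPrimitiveRoot (X g₀) l := by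
    rw [← IsPrimitiveRoot.coe_submonoidClass_iff]
    exact hζ
  have hadjL : Algebra.adjoin ℚ ({X g₀} : Set ↥L) = ⊤ :=
    IsCyclotomicExtension.adjoin_primitive_root_eq_top (n := lp) hζL
  -- extensionality of automorphisms of L via the generator
  have hgen : ∀ x : ↥L, ∃ p : Polynomial ℚ, Polynomial.aeval (X g₀) p = x := by
    intro x
    have hx : x ∈ (Polynomial.aeval (R := ℚ) (X g₀)).range := by
      rw [← Algebra.adjoin_singleton_eq_range_aeval, hadjL]; trivial
    obtain ⟨p, hp⟩ := hx
    exact ⟨p, hp⟩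
  have hext : ∀ σ τ : (↥L ≃ₐ[ℚ] ↥L), σ (X g₀) = τ (X g₀) → σ = τ := by
    intro σ τ hστ
    apply AlgEquiv.ext
    intro x
    obtain ⟨p, rfl⟩ := hgen x
    have h1 := Polynomial.aeval_algHom_apply (σ : ↥L →ₐ[ℚ] ↥L) (X g₀) p
    have h2 := Polynomial.aeval_algHom_apply (τ : ↥L →ₐ[ℚ] ↥L) (X g₀) p
    simp only [AlgEquiv.coe_algHom] at h1 h2
    rw [← h1, ← h2, hστ]
  -- exponents of automorphisms
  have he : ∀ σ : ↥L ≃ₐ[ℚ] ↥L, ∃ i : ℕ, (X g₀) ^ i = σ (X g₀) ∧ i.Coprime l := by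
    intro σ
    have h1 : (σ (X g₀)) ^ l = 1 := by rw [← map_pow, hXl, map_one]
    obtain ⟨i, _, hi⟩ := hζL.eq_pow_of_pow_eq_one h1
    refine ⟨i, hi, ?_⟩
    refine (hζL.pow_iff_coprime (by omega) i).mp ?_
    rw [hi]
    exact hζL.map_of_injective σ.injective
  choose e he1 he2 using he
  have hXg : ∀ (σ : ↥L ≃ₐ[ℚ] ↥L) (h : (↥K₀ ≃ₐ[ℚ] ↥K₀)), σ (X h) = X h ^ e σ := by
    intro σ h
    obtain ⟨k, hk⟩ := hpow h
    have hXh : X h = X g₀ ^ k := by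
      apply Subtype.ext; rw [SubmonoidClass.coe_pow]; exact hk
    rw [hXh, map_pow, ← he1 σ, ← pow_mul, mul_comm, pow_mul]
  have hXgC : ∀ (σ : ↥L ≃ₐ[ℚ] ↥L) (h : (↥K₀ ≃ₐ[ℚ] ↥K₀)), ((σ (X h) : ↥L) : ℂ) = χ h ^ (e σ : ℤ) := by
    intro σ h
    rw [hXg, SubmonoidClass.coe_pow, hXval, ← zpow_natCast]
  have htr : ∀ x : ↥L, ((Algebra.trace ℚ ↥L x : ℚ) : ℂ) = ∑ σ : ↥L ≃ₐ[ℚ] ↥L, ((σ x : ↥L) : ℂ) := by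
    intro x
    have h1 := trace_eq_sum_automorphisms (K := ℚ) x
    have h2 := congrArg (algebraMap ↥L ℂ) h1
    rw [map_sum] at h2
    rw [← IsScalarTower.algebraMap_apply ℚ ↥L ℂ] at h2
    simpa using h2
  have hEinj : ∀ σ τ : ↥L ≃ₐ[ℚ] ↥L, ((e σ : ZMod l) = (e τ : ZMod l)) → σ = τ := by
    intro σ τ hs
    have hmod : e σ ≡ e τ [MOD l] := (ZMod.natCast_eq_natCast_iff _ _ _).mp hs
    have keyC : ∀ i : ℕ, (χ g₀) ^ i = (χ g₀) ^ (i % l) := by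
      intro i
      conv_lhs => rw [← Nat.div_add_mod i l]
      rw [pow_add, pow_mul, hχl, one_pow, one_mul]
    have hpoweq : (X g₀) ^ e σ = (X g₀) ^ e τ := by
      apply Subtype.ext
      rw [SubmonoidClass.coe_pow, SubmonoidClass.coe_pow, hXval, keyC (e σ), keyC (e τ), hmod]
    exact hext σ τ (by rw [← he1 σ, ← he1 τ, hpoweq])
  obtain ⟨n, hn⟩ : ∃ n : ℕ, n = Fintype.card (↥K₀ ≃ₐ[ℚ] ↥K₀) := ⟨_, rfl⟩
  have hnpos : 0 < n := hn ▸ Fintype.card_pos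
  have hnC : (n : ℂ) ≠ 0 := Nat.cast_ne_zero.mpr hnpos.ne'
  have hnQ : (n : ℚ) ≠ 0 := Nat.cast_ne_zero.mpr hnpos.ne'
  set E : (↥L ≃ₐ[ℚ] ↥L) → (ZMod l)ˣ := fun σ => ZMod.unitOfCoprime (e σ) (he2 σ) with hE
  have hEbij : Function.Bijective E := by
    refine (Fintype.bijective_iff_injective_and_card E).mpr ⟨?_, ?_⟩
    · intro σ τ h
      apply hEinj
      have := congrArg (fun u : (ZMod l)ˣ => (u : ZMod l)) h
      simpa [hE, ZMod.coe_unitOfCoprime] using this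
    · rw [← Nat.card_eq_fintype_card, IsGalois.card_aut_eq_finrank, hfr, ZMod.card_units_eq_totient]
  -- character orthogonality
  have horth1 : ∀ a : ℤ, (l : ℤ) ∣ a → ∑ h : (↥K₀ ≃ₐ[ℚ] ↥K₀), χ h ^ a = (n : ℂ) := by
    intro a ha
    rw [Finset.sum_congr rfl fun h _ => aux_zpow_eq_one (hχl h) ha]
    rw [Finset.sum_const, Finset.card_univ, hn]
    simp
  have horth0 : ∀ a : ℤ, ¬ ((l : ℤ) ∣ a) → ∑ h : (↥K₀ ≃ₐ[ℚ] ↥K₀), χ h ^ a = 0 := by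
    intro a ha
    have hψ : ∃ ψ : (↥K₀ ≃ₐ[ℚ] ↥K₀) →* ℂ, ∀ h, ψ h = χ h ^ a := by
      refine ⟨MonoidHom.mk (OneHom.mk (fun h => χ h ^ a) ?_) ?_, fun h => rfl⟩
      · show χ (1 : (↥K₀ ≃ₐ[ℚ] ↥K₀)) ^ a = 1
        rw [map_one, one_zpow]
      · intro x y
        show χ (x * y) ^ a = χ x ^ a * χ y ^ a
        rw [χ.map_mul x y, mul_zpow]
    obtain ⟨ψ, hψ⟩ := hψ
    have : ∑ h : (↥K₀ ≃ₐ[ℚ] ↥K₀), ψ h = 0 := by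
      apply aux_char_sum_zero
      refine ⟨g₀, ?_⟩
      rw [hψ]
      intro hcon
      exact ha ((hζ.zpow_eq_one_iff_dvd a).mp hcon)
    rw [← this]
    exact Finset.sum_congr rfl fun h _ => (hψ h).symm
  have hdvd_iff : ∀ σ τ : ↥L ≃ₐ[ℚ] ↥L, ((l : ℤ) ∣ (e σ : ℤ) - (e τ : ℤ)) ↔ σ = τ := by
    intro σ τ
    constructor
    · intro hdvd
      apply hEinj
      have : ((e τ : ℤ) : ZMod l) = ((e σ : ℤ) : ZMod l) :=
        (ZMod.intCast_eq_intCast_iff _ _ _).mpr ((Int.modEq_iff_dvd (a := (e τ : ℤ)) (b := (e σ : ℤ))).mpr hdvd)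
      simpa using this.symm
    · rintro rfl
      simp
  have horth2 : ∀ σ τ : ↥L ≃ₐ[ℚ] ↥L, (∑ h : (↥K₀ ≃ₐ[ℚ] ↥K₀), χ h ^ ((e σ : ℤ) - (e τ : ℤ)))
      = if σ = τ then (n : ℂ) else 0 := by
    intro σ τ
    by_cases hστ : σ = τ
    · rw [if_pos hστ]
      exact horth1 _ ((hdvd_iff σ τ).mpr hστ)
    · rw [if_neg hστ]
      exact horth0 _ (fun hcon => hστ ((hdvd_iff σ τ).mp hcon))
  -- abbreviations
  set T : (↥K₀ ≃ₐ[ℚ] ↥K₀) → ℚ := fun g => Algebra.trace ℚ ↥L (X g⁻¹) with hT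
  have hCQ' : CQ = (n : ℚ)⁻¹ • ∑ g : (↥K₀ ≃ₐ[ℚ] ↥K₀), MonoidAlgebra.single g (T g) := by
    rw [hn]; exact hCQ
  have hχab : ∀ a b : (↥K₀ ≃ₐ[ℚ] ↥K₀), χ (a * b) = χ (b * a) := by
    intro a b; rw [χ.map_mul, χ.map_mul, mul_comm]
  have hXab : ∀ a b : (↥K₀ ≃ₐ[ℚ] ↥K₀), X (a * b) = X (b * a) := by
    intro a b; exact Subtype.ext (hχab a b)
  -- membership in LR, pointwise
  have hmem1 : ∀ m : (↥K₀ ≃ₐ[ℚ] ↥K₀) → ℚ,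
      ((∑ h : (↥K₀ ≃ₐ[ℚ] ↥K₀), MonoidAlgebra.single h (m h)) = (∑ h : (↥K₀ ≃ₐ[ℚ] ↥K₀), MonoidAlgebra.single h (m h)) * CQ)
      ↔ ∀ k, m k = (n : ℚ)⁻¹ * ∑ g : (↥K₀ ≃ₐ[ℚ] ↥K₀), m (k * g⁻¹) * T g := by
    intro m
    rw [hCQ', Finset.smul_sum]
    simp only [MonoidAlgebra.smul_single']
    rw [aux_mul_single, aux_sum_single_eq_iff]
    have hrw : ∀ k : (↥K₀ ≃ₐ[ℚ] ↥K₀), ∑ g : (↥K₀ ≃ₐ[ℚ] ↥K₀), m (k * g⁻¹) * ((n : ℚ)⁻¹ * T g)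
        = (n : ℚ)⁻¹ * ∑ g : (↥K₀ ≃ₐ[ℚ] ↥K₀), m (k * g⁻¹) * T g := by
      intro k
      rw [Finset.mul_sum]
      exact Finset.sum_congr rfl fun g _ => by ring
    exact forall_congr' fun k => by rw [hrw k]
  have hmem2 : ∀ m : (↥K₀ ≃ₐ[ℚ] ↥K₀) → ℚ,
      ((∑ h : (↥K₀ ≃ₐ[ℚ] ↥K₀), MonoidAlgebra.single h ((m h : ℂ)))
        * (∑ g : (↥K₀ ≃ₐ[ℚ] ↥K₀), MonoidAlgebra.single (g⁻¹) ((g α : ↥K₀) : ℂ)) = 0)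
      ↔ ∀ k : (↥K₀ ≃ₐ[ℚ] ↥K₀), ∑ g : (↥K₀ ≃ₐ[ℚ] ↥K₀), (m (k * g) : ℂ) * ((g α : ↥K₀) : ℂ) = 0 := by
    intro m
    have h2 : (∑ g : (↥K₀ ≃ₐ[ℚ] ↥K₀), MonoidAlgebra.single (g⁻¹) ((g α : ↥K₀) : ℂ))
        = ∑ g : (↥K₀ ≃ₐ[ℚ] ↥K₀), MonoidAlgebra.single g (((g⁻¹ : (↥K₀ ≃ₐ[ℚ] ↥K₀)) α : ↥K₀) : ℂ) := by
      rw [← Equiv.sum_comp (Equiv.inv (↥K₀ ≃ₐ[ℚ] ↥K₀))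
        (fun g => MonoidAlgebra.single g (((g⁻¹ : (↥K₀ ≃ₐ[ℚ] ↥K₀)) α : ↥K₀) : ℂ))]
      exact Finset.sum_congr rfl fun g _ => by simp
    rw [h2, aux_mul_single, aux_sum_single_eq_zero_iff]
    have h3 : ∀ k : (↥K₀ ≃ₐ[ℚ] ↥K₀), (∑ g : (↥K₀ ≃ₐ[ℚ] ↥K₀), (m (k * g⁻¹) : ℂ) * (((g⁻¹ : (↥K₀ ≃ₐ[ℚ] ↥K₀)) α : ↥K₀) : ℂ))
        = ∑ g : (↥K₀ ≃ₐ[ℚ] ↥K₀), (m (k * g) : ℂ) * ((g α : ↥K₀) : ℂ) := by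
      intro k
      rw [← Equiv.sum_comp (Equiv.inv (↥K₀ ≃ₐ[ℚ] ↥K₀))
        (fun g => (m (k * g) : ℂ) * ((g α : ↥K₀) : ℂ))]
      exact Finset.sum_congr rfl fun g _ => by simp
    exact forall_congr' fun k => by rw [h3 k]
  have hmemLR : ∀ m : (↥K₀ ≃ₐ[ℚ] ↥K₀) → ℚ, m ∈ LR ↔
      ((∀ k, m k = (n : ℚ)⁻¹ * ∑ g : (↥K₀ ≃ₐ[ℚ] ↥K₀), m (k * g⁻¹) * T g) ∧
       (∀ k : (↥K₀ ≃ₐ[ℚ] ↥K₀), ∑ g : (↥K₀ ≃ₐ[ℚ] ↥K₀), (m (k * g) : ℂ) * ((g α : ↥K₀) : ℂ) = 0)) := by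
    intro m
    rw [hLR]
    exact and_congr (hmem1 m) (hmem2 m)
  -- traces in ℂ
  have hTrC : ∀ (c : ↥L) (k : (↥K₀ ≃ₐ[ℚ] ↥K₀)),
      ((Algebra.trace ℚ ↥L (c * X k⁻¹) : ℚ) : ℂ)
        = ∑ σ : ↥L ≃ₐ[ℚ] ↥L, ((σ c : ↥L) : ℂ) * (χ k) ^ (-(e σ : ℤ)) := by
    intro c k
    rw [htr]
    refine Finset.sum_congr rfl fun σ _ => ?_
    rw [map_mul, MulMemClass.coe_mul, hXgC σ k⁻¹]
    congr 1
    rw [map_inv χ k, inv_zpow, ← zpow_neg]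
  have hTgC : ∀ g : (↥K₀ ≃ₐ[ℚ] ↥K₀),
      ((T g : ℚ) : ℂ) = ∑ σ : ↥L ≃ₐ[ℚ] ↥L, (χ g) ^ (-(e σ : ℤ)) := by
    intro g
    have h1 := hTrC 1 g
    rw [one_mul] at h1
    rw [hT]
    simpa using h1
  have hzpow_combine : ∀ (u v : ℂ), v ≠ 0 → ∀ (a b : ℤ) (w : ℂ),
      (w * (u * v⁻¹) ^ (-a)) * v ^ (-b) = (w * u ^ (-a)) * v ^ (a - b) := by
    intro u v hv a b w
    have h1 : (u * v⁻¹) ^ (-a) = u ^ (-a) * v ^ a := by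
      rw [mul_zpow, inv_zpow, ← zpow_neg, neg_neg]
    have h2 : v ^ (a - b) = v ^ a * v ^ (-b) := by
      rw [sub_eq_add_neg, zpow_add₀ hv]
    rw [h1, h2]
    ring
  -- Claim A
  have hA : ∀ (c : ↥L) (k : (↥K₀ ≃ₐ[ℚ] ↥K₀)),
      Algebra.trace ℚ ↥L (c * X k⁻¹)
        = (n : ℚ)⁻¹ * ∑ g : (↥K₀ ≃ₐ[ℚ] ↥K₀), Algebra.trace ℚ ↥L (c * X (k * g⁻¹)⁻¹) * T g := by
    intro c k
    have hg : ∀ g : (↥K₀ ≃ₐ[ℚ] ↥K₀),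
        ((Algebra.trace ℚ ↥L (c * X (k * g⁻¹)⁻¹) : ℚ) : ℂ) * ((T g : ℚ) : ℂ)
        = ∑ σ : ↥L ≃ₐ[ℚ] ↥L, ∑ τ : ↥L ≃ₐ[ℚ] ↥L,
            ((((σ : ↥L ≃ₐ[ℚ] ↥L) c : ↥L) : ℂ) * (χ k) ^ (-(e σ : ℤ)))
              * (χ g) ^ ((e σ : ℤ) - (e τ : ℤ)) := by
      intro g
      rw [hTrC c (k * g⁻¹), hTgC g, Finset.sum_mul_sum]
      refine Finset.sum_congr rfl fun σ _ => Finset.sum_congr rfl fun τ _ => ?_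
      have hkg : χ (k * g⁻¹) = χ k * (χ g)⁻¹ := by rw [χ.map_mul, map_inv χ g]
      rw [hkg]
      exact hzpow_combine (χ k) (χ g) (hχ0 g) (e σ) (e τ) _
    have hsum : ((∑ g : (↥K₀ ≃ₐ[ℚ] ↥K₀), Algebra.trace ℚ ↥L (c * X (k * g⁻¹)⁻¹) * T g : ℚ) : ℂ)
        = (∑ σ : ↥L ≃ₐ[ℚ] ↥L, ((σ c : ↥L) : ℂ) * (χ k) ^ (-(e σ : ℤ))) * (n : ℂ) := by
      rw [Rat.cast_sum]
      rw [Finset.sum_congr rfl fun g _ => by rw [Rat.cast_mul, hg g]]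
      rw [Finset.sum_comm]
      rw [Finset.sum_congr rfl fun (σ : ↥L ≃ₐ[ℚ] ↥L) _ => Finset.sum_comm]
      rw [Finset.sum_congr rfl fun (σ : ↥L ≃ₐ[ℚ] ↥L) _ =>
        Finset.sum_congr rfl fun (τ : ↥L ≃ₐ[ℚ] ↥L) _ => by rw [← Finset.mul_sum, horth2 σ τ]]
      simp only [mul_ite, mul_zero, Finset.sum_ite_eq, Finset.mem_univ, if_true]
      rw [← Finset.sum_mul]
    have hget : ((Algebra.trace ℚ ↥L (c * X k⁻¹) : ℚ) : ℂ)
        = (((n : ℚ)⁻¹ * ∑ g : (↥K₀ ≃ₐ[ℚ] ↥K₀), Algebra.trace ℚ ↥L (c * X (k * g⁻¹)⁻¹) * T g : ℚ) : ℂ) := by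
      rw [Rat.cast_mul, hsum, hTrC c k, Rat.cast_inv, Rat.cast_natCast]
      symm
      rw [mul_comm, mul_assoc, mul_inv_cancel₀ hnC, mul_one]
    exact Rat.cast_injective hget
  -- Claim B
  have hB : (∀ d : ℤ, IsCoprime d (l : ℤ) →
        ∑ g : ↥K₀ ≃ₐ[ℚ] ↥K₀, χ g ^ d * ((g α : ↥K₀) : ℂ) = 0) →
      ∀ (c : ↥L) (k : ↥K₀ ≃ₐ[ℚ] ↥K₀),
        ∑ g : ↥K₀ ≃ₐ[ℚ] ↥K₀,
          ((Algebra.trace ℚ ↥L (c * X (k * g)⁻¹) : ℚ) : ℂ) * ((g α : ↥K₀) : ℂ) = 0 := by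
    intro Hd c k
    have hco : ∀ σ : ↥L ≃ₐ[ℚ] ↥L, IsCoprime (-(e σ : ℤ)) (l : ℤ) :=
      fun σ => ((Nat.isCoprime_iff_coprime).mpr (he2 σ)).neg_left
    have step1 : ∀ g : ↥K₀ ≃ₐ[ℚ] ↥K₀,
        ((Algebra.trace ℚ ↥L (c * X (k * g)⁻¹) : ℚ) : ℂ) * ((g α : ↥K₀) : ℂ)
        = ∑ σ : ↥L ≃ₐ[ℚ] ↥L,
            (((σ c : ↥L) : ℂ) * (χ k) ^ (-(e σ : ℤ))) * ((χ g) ^ (-(e σ : ℤ)) * ((g α : ↥K₀) : ℂ)) := by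
      intro g
      rw [hTrC c (k * g), Finset.sum_mul]
      refine Finset.sum_congr rfl fun σ _ => ?_
      have hkg : χ (k * g) = χ k * χ g := χ.map_mul k g
      rw [hkg, mul_zpow]
      ring
    rw [Finset.sum_congr rfl fun g _ => step1 g, Finset.sum_comm]
    refine Finset.sum_eq_zero fun σ _ => ?_
    rw [← Finset.mul_sum, Hd (-(e σ : ℤ)) (hco σ), mul_zero]
  -- Claim C
  have hCm : ∀ m : (↥K₀ ≃ₐ[ℚ] ↥K₀) → ℚ,
      (∀ k, m k = (n : ℚ)⁻¹ * ∑ g : ↥K₀ ≃ₐ[ℚ] ↥K₀, m (k * g⁻¹) * T g) →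
      ∀ k, m k = Algebra.trace ℚ ↥L
        (((n : ℚ)⁻¹ • ∑ h : ↥K₀ ≃ₐ[ℚ] ↥K₀, m h • X h) * X k⁻¹) := by
    intro m hm k
    rw [hm k, smul_mul_assoc, Finset.sum_mul, map_smul, smul_eq_mul]
    congr 1
    rw [map_sum]
    refine Fintype.sum_equiv ((Equiv.inv (↥K₀ ≃ₐ[ℚ] ↥K₀)).trans
      (Equiv.mulLeft k)) _ _ fun g => ?_
    -- goal : m (k * g⁻¹) * T g = trace (m (k * g⁻¹) • X (k * g⁻¹) * X k⁻¹)
    show m (k * g⁻¹) * T g = Algebra.trace ℚ ↥L (m (k * g⁻¹) • X (k * g⁻¹) * X k⁻¹)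
    rw [smul_mul_assoc, map_smul, smul_eq_mul]
    congr 1
    rw [← hXmul, hXab, hT]
    simp
  -- Claim D (injectivity)
  have hD : ∀ c : ↥L, (∀ g : ↥K₀ ≃ₐ[ℚ] ↥K₀, Algebra.trace ℚ ↥L (c * X g⁻¹) = 0) → c = 0 := by
    intro c hc
    have hpow0 : ∀ j : ℕ, Algebra.trace ℚ ↥L (c * X g₀ ^ j) = 0 := by
      intro j
      have h1 : X g₀ ^ j = X ((g₀ ^ j)⁻¹)⁻¹ := by rw [inv_inv, hXpow]
      rw [h1]
      exact hc ((g₀ ^ j)⁻¹)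
    have hall : ∀ x : ↥L, Algebra.trace ℚ ↥L (c * x) = 0 := by
      intro x
      obtain ⟨p, rfl⟩ := hgen x
      rw [Polynomial.aeval_eq_sum_range, Finset.mul_sum, map_sum]
      refine Finset.sum_eq_zero fun i _ => ?_
      rw [mul_smul_comm, map_smul, hpow0 i, smul_zero]
    have hnd := traceForm_nondegenerate ℚ ↥L
    refine hnd.1 c fun y => ?_
    rw [Algebra.traceForm_apply]
    exact hall y
  -- Claim E
  have hS0 : ∀ m : (↥K₀ ≃ₐ[ℚ] ↥K₀) → ℚ, m ∈ LR → m ≠ 0 →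
      ∀ d : ℤ, IsCoprime d (l : ℤ) →
        ∑ g : ↥K₀ ≃ₐ[ℚ] ↥K₀, χ g ^ d * ((g α : ↥K₀) : ℂ) = 0 := by
    intro m hmLR hm0 d hd
    obtain ⟨h1, h2⟩ := (hmemLR m).mp hmLR
    obtain ⟨c, hcdef⟩ : ∃ c : ↥L, c = (n : ℚ)⁻¹ • ∑ h : ↥K₀ ≃ₐ[ℚ] ↥K₀, m h • X h := ⟨_, rfl⟩
    have hmc : ∀ k, m k = Algebra.trace ℚ ↥L (c * X k⁻¹) := by
      intro k; rw [hcdef]; exact hCm m h1 k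
    have hc0 : c ≠ 0 := by
      intro h0
      apply hm0
      funext k
      show m k = 0
      rw [hmc k, h0, zero_mul, map_zero]
    -- the automorphism σ₀ with e σ₀ ≡ -d (mod l)
    obtain ⟨u, v, huv⟩ := hd
    have hu1 : ((d : ℤ) : ZMod l) * ((u : ℤ) : ZMod l) = 1 := by
      have h6 := congrArg (fun t : ℤ => ((t : ZMod l))) huv
      push_cast at h6
      rw [ZMod.natCast_self, mul_zero, add_zero] at h6
      rw [mul_comm]
      exact h6
    obtain ⟨σ₀, hσ₀⟩ := hEbij.surjective (-(Units.mkOfMulEqOne _ _ hu1))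
    have hσmod : ((e σ₀ : ℕ) : ZMod l) = -((d : ℤ) : ZMod l) := by
      have h6 := congrArg (fun w : (ZMod l)ˣ => (w : ZMod l)) hσ₀
      simpa [hE, ZMod.coe_unitOfCoprime, Units.val_neg, Units.val_mkOfMulEqOne] using h6
    have hdlt : ∀ σ : ↥L ≃ₐ[ℚ] ↥L, ((l : ℤ) ∣ (-(e σ : ℤ) - d)) ↔ σ = σ₀ := by
      intro σ
      constructor
      · intro hdvd
        apply hEinj
        have h7 : ((-(e σ : ℤ) - d : ℤ) : ZMod l) = 0 :=
          (ZMod.intCast_zmod_eq_zero_iff_dvd _ _).mpr hdvd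
        push_cast at h7
        have h8 : ((e σ : ℕ) : ZMod l) = -((d : ℤ) : ZMod l) := by linear_combination -h7
        rw [h8, ← hσmod]
      · rintro rfl
        apply (ZMod.intCast_zmod_eq_zero_iff_dvd _ _).mp
        push_cast
        rw [hσmod]
        ring
    -- the product identity
    have key : (∑ h : ↥K₀ ≃ₐ[ℚ] ↥K₀, (m h : ℂ) * χ h ^ (-d))
        * (∑ g : ↥K₀ ≃ₐ[ℚ] ↥K₀, χ g ^ d * ((g α : ↥K₀) : ℂ)) = 0 := by
      have h4 : ∑ k : ↥K₀ ≃ₐ[ℚ] ↥K₀,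
          χ k ^ (-d) * (∑ g : ↥K₀ ≃ₐ[ℚ] ↥K₀, (m (k * g) : ℂ) * ((g α : ↥K₀) : ℂ)) = 0 :=
        Finset.sum_eq_zero fun k _ => by rw [h2 k, mul_zero]
      have hL1 : (∑ h : ↥K₀ ≃ₐ[ℚ] ↥K₀, (m h : ℂ) * χ h ^ (-d))
          * (∑ g : ↥K₀ ≃ₐ[ℚ] ↥K₀, χ g ^ d * ((g α : ↥K₀) : ℂ))
          = ∑ g : ↥K₀ ≃ₐ[ℚ] ↥K₀, ∑ h : ↥K₀ ≃ₐ[ℚ] ↥K₀,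
              (m h : ℂ) * χ h ^ (-d) * (χ g ^ d * ((g α : ↥K₀) : ℂ)) := by
        rw [Finset.sum_mul_sum, Finset.sum_comm]
      have hL2 : ∑ k : ↥K₀ ≃ₐ[ℚ] ↥K₀,
          χ k ^ (-d) * (∑ g : ↥K₀ ≃ₐ[ℚ] ↥K₀, (m (k * g) : ℂ) * ((g α : ↥K₀) : ℂ))
          = ∑ g : ↥K₀ ≃ₐ[ℚ] ↥K₀, ∑ h : ↥K₀ ≃ₐ[ℚ] ↥K₀,
              (m h : ℂ) * χ h ^ (-d) * (χ g ^ d * ((g α : ↥K₀) : ℂ)) := by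
        rw [Finset.sum_congr rfl fun k (_ : k ∈ Finset.univ) => Finset.mul_sum _ _ _]
        rw [Finset.sum_comm]
        refine Finset.sum_congr rfl fun g _ => ?_
        rw [← Equiv.sum_comp (Equiv.mulRight g⁻¹)
          (fun k => χ k ^ (-d) * ((m (k * g) : ℂ) * ((g α : ↥K₀) : ℂ)))]
        refine Finset.sum_congr rfl fun h _ => ?_
        simp only [Equiv.coe_mulRight]
        rw [inv_mul_cancel_right]
        have hxx : χ (h * g⁻¹) = χ h * (χ g)⁻¹ := by rw [χ.map_mul, map_inv χ g]
        rw [hxx, mul_zpow, inv_zpow, ← zpow_neg, neg_neg]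
        ring
      rw [hL1, ← hL2, h4]
    -- the first factor is nonzero
    have hMhat : ∑ h : ↥K₀ ≃ₐ[ℚ] ↥K₀, (m h : ℂ) * χ h ^ (-d)
        = ((σ₀ c : ↥L) : ℂ) * (n : ℂ) := by
      have e1 : ∀ h : ↥K₀ ≃ₐ[ℚ] ↥K₀, (m h : ℂ) * χ h ^ (-d)
          = ∑ σ : ↥L ≃ₐ[ℚ] ↥L, ((σ c : ↥L) : ℂ) * χ h ^ (-(e σ : ℤ) - d) := by
        intro h
        rw [hmc h, hTrC c h, Finset.sum_mul]
        refine Finset.sum_congr rfl fun σ _ => ?_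
        rw [mul_assoc, ← zpow_add₀ (hχ0 h), ← sub_eq_add_neg]
      rw [Finset.sum_congr rfl fun h _ => e1 h, Finset.sum_comm]
      have e2 : ∀ σ : ↥L ≃ₐ[ℚ] ↥L,
          ∑ h : ↥K₀ ≃ₐ[ℚ] ↥K₀, ((σ c : ↥L) : ℂ) * χ h ^ (-(e σ : ℤ) - d)
          = ((σ c : ↥L) : ℂ) * (if σ = σ₀ then (n : ℂ) else 0) := by
        intro σ
        rw [← Finset.mul_sum]
        congr 1
        by_cases hσ : σ = σ₀
        · rw [if_pos hσ]; exact horth1 _ ((hdlt σ).mpr hσ)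
        · rw [if_neg hσ]; exact horth0 _ (fun hcon => hσ ((hdlt σ).mp hcon))
      rw [Finset.sum_congr rfl fun σ _ => e2 σ]
      simp only [mul_ite, mul_zero, Finset.sum_ite_eq', Finset.mem_univ, if_true]
    have hne : ((σ₀ c : ↥L) : ℂ) ≠ 0 := by
      intro h0
      apply hc0
      apply σ₀.injective
      rw [map_zero]
      exact ZeroMemClass.coe_eq_zero.mp h0
    rcases mul_eq_zero.mp key with hzero | hzero
    · exfalso
      rw [hMhat] at hzero
      rcases mul_eq_zero.mp hzero with h | h
      · exact hne h
      · exact hnC h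
    · exact hzero
  have hXanon : ∀ g : ↥K₀ ≃ₐ[ℚ] ↥K₀, (⟨χ g, hmem g⟩ : ↥L) = X g := fun g => rfl
  constructor
  · -- the iff
    constructor
    · rintro ⟨m, hm, hm0⟩
      exact hS0 m hm hm0
    · intro Hd
      refine ⟨fun g => T g, (hmemLR _).mpr ⟨?_, ?_⟩, ?_⟩
      · intro k
        have h9 := hA 1 k
        simp only [one_mul] at h9
        exact h9
      · intro k
        have h9 := hB Hd 1 k
        simp only [one_mul] at h9
        exact h9
      · intro h0
        refine one_ne_zero (hD 1 fun g => ?_)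
        have h9 := congrFun h0 g
        rw [one_mul]
        exact h9
  · intro Hd
    refine ⟨?_, ?_, hfr⟩
    · ext m
      simp only [Set.mem_setOf_eq, hXanon]
      constructor
      · intro hmLR
        obtain ⟨h1, h2⟩ := (hmemLR m).mp hmLR
        exact ⟨(n : ℚ)⁻¹ • ∑ h : ↥K₀ ≃ₐ[ℚ] ↥K₀, m h • X h, fun g => hCm m h1 g⟩
      · rintro ⟨c, hcm⟩
        refine (hmemLR m).mpr ⟨?_, ?_⟩
        · intro k
          rw [hcm k, hA c k]
          congr 1
          refine Finset.sum_congr rfl fun g _ => ?_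
          rw [hcm (k * g⁻¹)]
        · intro k
          have h9 := hB Hd c k
          rw [← h9]
          refine Finset.sum_congr rfl fun g _ => ?_
          rw [hcm (k * g)]
    · intro c c' hcc
      have hgg : ∀ g : ↥K₀ ≃ₐ[ℚ] ↥K₀,
          Algebra.trace ℚ ↥L (c * X g⁻¹) = Algebra.trace ℚ ↥L (c' * X g⁻¹) :=
        fun g => congrFun hcc g
      have hsub : ∀ g : ↥K₀ ≃ₐ[ℚ] ↥K₀, Algebra.trace ℚ ↥L ((c - c') * X g⁻¹) = 0 := by
        intro g
        rw [sub_mul, map_sub, hgg g, sub_self]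
      exact sub_eq_zero.mp (hD (c - c') hsub)
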